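/- Suppose moreover that the maps D_i : [0,∞) → ℝ^{d×d} are continuous and that φ belongs to 𝒞 = {φ ∈ C⁰([−η_M,0],ℝ^d) : φ(0) = Σ_{i=1}^M D_i(0) φ(−η_i)}. Then the unique solution z of the difference-delay system z(t) = Σ_{i=1}^M D_i(t) z(t−η_i) with initial condition φ is continuous on [−η_M,∞) and satisfies the equation for all t ≥ 0. -/

import Mathlib

open MeasureTheory Matrix Filter Set
open scoped ENNReal

/-- Euclidean norm of a vector in `ℝ^ι`. -/
noncomputable def euclNorm {ι : Type*} [Fintype ι] (x : ι → ℝ) : ℝ :=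
  Real.sqrt (∑ j, (x j) ^ 2)

/-- `z` belongs to `L^p_loc([-ηM, ∞), ℝ^d)` and satisfies the time-varying difference-delay
system `z(t) = ∑ i, D i (t) * z (t - η i)` for a.e. `t ≥ 0` (`ηM` is the largest delay;
the values of `z` on `[-ηM, 0]` are its initial condition). -/
def DelaySol (d M : ℕ) (η : Fin M → ℝ) (D : Fin M → ℝ → Matrix (Fin d) (Fin d) ℝ)
    (ηM : ℝ) (p : ℝ≥0∞) (z : ℝ → Fin d → ℝ) : Prop :=
  (∀ b : ℝ, MemLp z p (volume.restrict (Set.Icc (-ηM) b))) ∧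
  (∀ᵐ t ∂(volume.restrict (Set.Ici (0 : ℝ))), z t = ∑ i, (D i t).mulVec (z (t - η i)))

/-- `L^p` exponential stability of the difference-delay system. -/
def DelayLpStable (d M : ℕ) (η : Fin M → ℝ) (D : Fin M → ℝ → Matrix (Fin d) (Fin d) ℝ)
    (ηM : ℝ) (p : ℝ≥0∞) : Prop :=
  ∃ C > (0 : ℝ), ∃ γ > (0 : ℝ), ∀ z, DelaySol d M η D ηM p z → ∀ t ≥ (0 : ℝ),
    eLpNorm (fun θ => euclNorm (z (t + θ))) p (volume.restrict (Set.Icc (-ηM) 0)) ≤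
      ENNReal.ofReal (C * Real.exp (-γ * t)) *
        eLpNorm (fun θ => euclNorm (z θ)) p (volume.restrict (Set.Icc (-ηM) 0))

/-- `C⁰` exponential stability of the difference-delay system: continuous solutions
(the equation holding for all `t ≥ 0` forces the compatibility condition at `t = 0`). -/
def DelayC0Stable (d M : ℕ) (η : Fin M → ℝ) (D : Fin M → ℝ → Matrix (Fin d) (Fin d) ℝ)
    (ηM : ℝ) : Prop :=
  ∃ C > (0 : ℝ), ∃ γ > (0 : ℝ), ∀ z : ℝ → Fin d → ℝ,
    ContinuousOn z (Set.Ici (-ηM)) →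
    (∀ t ≥ (0 : ℝ), z t = ∑ i, (D i t).mulVec (z (t - η i))) →
    ∀ t ≥ (0 : ℝ), ∀ θ ∈ Set.Icc (-ηM) (0 : ℝ),
      euclNorm (z (t + θ)) ≤ C * Real.exp (-γ * t) *
        ⨆ θ' : Set.Icc (-ηM) (0 : ℝ), euclNorm (z (θ' : ℝ))

section Aux

variable {d M : ℕ} (η : Fin M → ℝ) (D : Fin M → ℝ → Matrix (Fin d) (Fin d) ℝ)
  (φ' : ℝ → Fin d → ℝ)

/-- The iterates of the step method: `zseq n` coincides with the solution on
`(-∞, n * η 0]`. -/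
noncomputable def zseq : ℕ → ℝ → Fin d → ℝ
  | 0 => φ'
  | (n + 1) => fun t =>
      if t ≤ 0 then φ' t else ∑ i, (D i (max t 0)).mulVec (zseq n (t - η i))

variable {η0 : ℝ}

lemma zseq_stable (h0 : 0 < η0) (hle : ∀ i, η0 ≤ η i) :
    ∀ n : ℕ, ∀ t : ℝ, t ≤ (n : ℝ) * η0 →
    zseq η D φ' (n + 1) t = zseq η D φ' n t := by
  intro n
  induction n with
  | zero =>
    intro t ht
    simp only [Nat.cast_zero, zero_mul] at ht
    simp [zseq, ht]
  | succ n ih =>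
    intro t ht
    by_cases h : t ≤ 0
    · simp [zseq, h]
    · have e : ∀ (k : ℕ) (s : ℝ), zseq η D φ' (k + 1) s =
          if s ≤ 0 then φ' s else ∑ i, (D i (max s 0)).mulVec (zseq η D φ' k (s - η i)) :=
        fun k s => rfl
      rw [e (n + 1) t, e n t, if_neg h, if_neg h]
      refine Finset.sum_congr rfl fun i _ => ?_
      rw [ih (t - η i) ?_]
      have := hle i
      push_cast at ht ⊢
      linarith

lemma zseq_stable_ge (h0 : 0 < η0) (hle : ∀ i, η0 ≤ η i) {n m : ℕ} (hnm : n ≤ m) :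
    ∀ t : ℝ, t ≤ (n : ℝ) * η0 → zseq η D φ' m t = zseq η D φ' n t := by
  induction m, hnm using Nat.le_induction with
  | base => intro t _; rfl
  | succ m hm ih =>
    intro t ht
    rw [zseq_stable η D φ' h0 hle m t
        (ht.trans (mul_le_mul_of_nonneg_right (Nat.cast_le.2 hm) h0.le)), ih t ht]

lemma zseq_continuous (h0 : 0 < η0) (hle : ∀ i, η0 ≤ η i) (hηpos : ∀ i, 0 < η i)
    (hφ'c : Continuous φ')
    (hDc : ∀ i, Continuous fun t => D i (max t 0))
    (hcompat : φ' 0 = ∑ i, (D i 0).mulVec (φ' (-η i))) :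
    ∀ n, Continuous (zseq η D φ' n) := by
  intro n
  induction n with
  | zero => exact hφ'c
  | succ n ih =>
    have hg : Continuous fun t => ∑ i, (D i (max t 0)).mulVec (zseq η D φ' n (t - η i)) :=
      continuous_finset_sum _ fun i _ =>
        (hDc i).matrix_mulVec (ih.comp (continuous_id.sub continuous_const))
    show Continuous fun t => if t ≤ 0 then φ' t
        else ∑ i, (D i (max t 0)).mulVec (zseq η D φ' n (t - η i))
    refine Continuous.if_le hφ'c hg continuous_id continuous_const fun t ht => ?_
    have ht0 : t = 0 := ht
    subst ht0
    have hneg : ∀ i : Fin M, zseq η D φ' n ((0 : ℝ) - η i) = φ' (-η i) := by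
      intro i
      have : zseq η D φ' n ((0 : ℝ) - η i) = zseq η D φ' 0 ((0 : ℝ) - η i) :=
        zseq_stable_ge η D φ' h0 hle (Nat.zero_le n) _ (by
          simp only [Nat.cast_zero, zero_mul]
          linarith [hηpos i])
      simpa [zseq] using this
    rw [hcompat]
    refine Finset.sum_congr rfl fun i _ => ?_
    rw [hneg i, max_self]

end Aux

/-- If the maps `D i` are continuous and the continuous initial condition
`φ` satisfies the compatibility condition `φ 0 = ∑ i, D i (0) * φ (−η i)`, then the unique
solution of the difference-delay system with initial condition `φ` is continuous on
`[−ηM, ∞)` and satisfies the equation for all `t ≥ 0`. -/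
theorem delay_continuous_solution
    (d M : ℕ) (hd : 1 ≤ d) (hM : 1 ≤ M)
    (η : Fin M → ℝ) (hηpos : ∀ i, 0 < η i) (hηmono : Monotone η)
    (D : Fin M → ℝ → Matrix (Fin d) (Fin d) ℝ)
    (hDmeas : ∀ i k l, Measurable fun t => D i t k l)
    (hDbdd : ∀ i, ∃ B : ℝ, ∀ᵐ t ∂(volume.restrict (Set.Ici (0 : ℝ))), ∀ k l, |D i t k l| ≤ B)
    (hDcont : ∀ i k l, ContinuousOn (fun t => D i t k l) (Set.Ici (0 : ℝ)))
    (ηM : ℝ) (hηM : ηM = η ⟨M - 1, by omega⟩)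
    (φ : ℝ → Fin d → ℝ) (hφcont : ContinuousOn φ (Set.Icc (-ηM) 0))
    (hφcompat : φ 0 = ∑ i, (D i 0).mulVec (φ (-η i))) :
    ∃ z : ℝ → Fin d → ℝ,
      (ContinuousOn z (Set.Ici (-ηM)) ∧ (∀ t ∈ Set.Icc (-ηM) (0 : ℝ), z t = φ t) ∧
        (∀ t ≥ (0 : ℝ), z t = ∑ i, (D i t).mulVec (z (t - η i)))) ∧
      (∀ z' : ℝ → Fin d → ℝ,
        (ContinuousOn z' (Set.Ici (-ηM)) ∧ (∀ t ∈ Set.Icc (-ηM) (0 : ℝ), z' t = φ t) ∧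
          (∀ t ≥ (0 : ℝ), z' t = ∑ i, (D i t).mulVec (z' (t - η i)))) →
        ∀ t ∈ Set.Ici (-ηM), z' t = z t) := by
  classical
  -- basic delay facts
  set η0 : ℝ := η ⟨0, by omega⟩ with hη0def
  have h0 : 0 < η0 := hηpos _
  have hle : ∀ i, η0 ≤ η i := fun i => hηmono (by simp [Fin.le_def])
  have hiM : ∀ i : Fin M, η i ≤ ηM := by
    intro i
    rw [hηM]
    exact hηmono (by simp [Fin.le_def]; omega)
  have hηMpos : 0 < ηM := hηM ▸ hηpos _
  -- clamped initial condition
  set φ' : ℝ → Fin d → ℝ := fun t => φ (max (-ηM) (min t 0)) with hφ'def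
  have hmem : ∀ t : ℝ, max (-ηM) (min t 0) ∈ Set.Icc (-ηM) 0 :=
    fun t => ⟨le_max_left _ _, max_le (by linarith) (min_le_right _ _)⟩
  have hφ'c : Continuous φ' :=
    hφcont.comp_continuous
      ((continuous_const.max (continuous_id.min continuous_const))) hmem
  have hφ'eq : ∀ t ∈ Set.Icc (-ηM) (0 : ℝ), φ' t = φ t := by
    rintro t ⟨h1, h2⟩
    simp [hφ'def, min_eq_left h2, max_eq_right h1]
  have hφ'neg : ∀ i : Fin M, φ' (-η i) = φ (-η i) := fun i =>
    hφ'eq _ ⟨by linarith [hiM i], by linarith [hηpos i]⟩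
  have hcompat : φ' 0 = ∑ i, (D i 0).mulVec (φ' (-η i)) := by
    rw [hφ'eq 0 ⟨by linarith, le_refl _⟩, hφcompat]
    exact Finset.sum_congr rfl fun i _ => by rw [hφ'neg i]
  have hDc : ∀ i, Continuous fun t => D i (max t 0) := by
    intro i
    refine continuous_pi fun k => continuous_pi fun l => ?_
    exact (hDcont i k l).comp_continuous (continuous_id.max continuous_const)
      fun t => le_max_right t 0
  -- the candidate solution
  set z : ℝ → Fin d → ℝ := fun t => zseq η D φ' ⌈t / η0⌉₊ t with hzdef
  have ceil_le : ∀ t : ℝ, t ≤ (⌈t / η0⌉₊ : ℝ) * η0 := by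
    intro t
    rcases le_or_gt t 0 with h | h
    · exact h.trans (by positivity)
    · rw [← div_le_iff₀ h0]
      exact Nat.le_ceil _
  have key : ∀ (n : ℕ) (t : ℝ), t ≤ (n : ℝ) * η0 → z t = zseq η D φ' n t := by
    intro n t ht
    have h1 : zseq η D φ' (max ⌈t / η0⌉₊ n) t = zseq η D φ' ⌈t / η0⌉₊ t :=
      zseq_stable_ge η D φ' h0 hle (le_max_left _ _) t (ceil_le t)
    have h2 : zseq η D φ' (max ⌈t / η0⌉₊ n) t = zseq η D φ' n t :=
      zseq_stable_ge η D φ' h0 hle (le_max_right _ _) t ht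
    rw [show z t = zseq η D φ' ⌈t / η0⌉₊ t from rfl, ← h1, h2]
  have hzφ : ∀ t ∈ Set.Icc (-ηM) (0 : ℝ), z t = φ t := by
    rintro t ⟨h1, h2⟩
    rw [key 0 t (by simpa using h2)]
    exact hφ'eq t ⟨h1, h2⟩
  -- z satisfies the equation
  have hz_eqn : ∀ t ≥ (0 : ℝ), z t = ∑ i, (D i t).mulVec (z (t - η i)) := by
    intro t ht
    set m := ⌈t / η0⌉₊ with hmdef
    have htm : t ≤ (m : ℝ) * η0 := ceil_le t
    have hzm : z t = zseq η D φ' (m + 1) t :=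
      key (m + 1) t (htm.trans (by push_cast; nlinarith))
    by_cases ht0 : t ≤ 0
    · have ht0' : t = 0 := le_antisymm ht0 ht
      subst ht0'
      rw [hzm]
      show (if (0 : ℝ) ≤ 0 then φ' 0 else _) = _
      rw [if_pos le_rfl, hcompat]
      refine Finset.sum_congr rfl fun i _ => ?_
      rw [hzφ (0 - η i) ⟨by linarith [hiM i], by linarith [hηpos i]⟩, hφ'neg i,
        zero_sub]
    · rw [hzm]
      show (if t ≤ 0 then φ' t else ∑ i, (D i (max t 0)).mulVec
          (zseq η D φ' m (t - η i))) = _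
      rw [if_neg ht0]
      refine Finset.sum_congr rfl fun i _ => ?_
      rw [max_eq_left ht, key m (t - η i) (by linarith [hηpos i])]
  -- continuity of z
  have hcontn := zseq_continuous η D φ' h0 hle hηpos hφ'c hDc hcompat
  have hzc : Continuous z := by
    rw [continuous_iff_continuousAt]
    intro t₀
    obtain ⟨n, hn⟩ := exists_nat_gt (t₀ / η0)
    have ht₀ : t₀ < (n : ℝ) * η0 := by rwa [← div_lt_iff₀ h0]
    have hev : z =ᶠ[nhds t₀] zseq η D φ' n := by
      filter_upwards [eventually_lt_nhds ht₀] with t ht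
      exact key n t ht.le
    exact ((hcontn n).continuousAt).congr hev.symm
  refine ⟨z, ⟨hzc.continuousOn, hzφ, hz_eqn⟩, ?_⟩
  -- uniqueness
  rintro z' ⟨-, h1, h2⟩ t ht
  have claim : ∀ (n : ℕ) (t : ℝ), -ηM ≤ t → t ≤ (n : ℝ) * η0 → z' t = z t := by
    intro n
    induction n with
    | zero =>
      intro t h h'
      simp only [Nat.cast_zero, zero_mul] at h'
      rw [h1 t ⟨h, h'⟩, hzφ t ⟨h, h'⟩]
    | succ n ih =>
      intro t h h'
      by_cases ht0 : t ≤ 0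
      · rw [h1 t ⟨h, ht0⟩, hzφ t ⟨h, ht0⟩]
      · push_neg at ht0
        rw [h2 t ht0.le, hz_eqn t ht0.le]
        refine Finset.sum_congr rfl fun i _ => ?_
        rw [ih (t - η i) (by linarith [hiM i]) (by push_cast at h' ⊢; linarith [hle i])]
  obtain ⟨n, hn⟩ := exists_nat_gt (t / η0)
  exact claim n t ht (by rw [← div_le_iff₀ h0]; exact hn.le)
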